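/- Let a, b ∈ ℂ with a ≠ 0, and define the generalized Hermite polynomials by p_0 = 1, p_1 = t − b, p_{n+1}(t) = (t − b) p_n(t) − a n p_{n−1}(t) for n ≥ 1. Let H = X + bI + aD, where X is the shift matrix and D the differentiation matrix (D_{k+1,k} = k+1). Then p_n(H) = ∑_{k=0}^{n} (n choose k) a^k D^k X^{n−k} for all n ≥ 0; in particular p_n(H) is independent of b. -/

import Mathlib

open scoped BigOperators

/-- Product of infinite matrices; the sum is a `tsum`, which reduces to a finite
sum for the banded matrices considered here. -/
noncomputable def matMul (A B : ℕ → ℕ → ℂ) : ℕ → ℕ → ℂ :=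
  fun i k => ∑' j, A i j * B j k

noncomputable def matPow (A : ℕ → ℕ → ℂ) : ℕ → ℕ → ℕ → ℂ
  | 0 => fun i k => if i = k then 1 else 0
  | n + 1 => matMul (matPow A n) A

/-- Substitution of a matrix into a polynomial. -/
noncomputable def matPolyEval (w : Polynomial ℂ) (A : ℕ → ℕ → ℂ) : ℕ → ℕ → ℂ :=
  fun i k => ∑ m ∈ Finset.range (w.natDegree + 1), w.coeff m * matPow A m i k

/-- The shift matrix `X`, with `X_{j,j+1} = 1`. -/
def Xmat : ℕ → ℕ → ℂ := fun i k => if k = i + 1 then 1 else 0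

/-- The transpose `X̂` of the shift matrix. -/
def XhatMat : ℕ → ℕ → ℂ := fun i k => if i = k + 1 then 1 else 0

/-- The identity matrix. -/
def Imat : ℕ → ℕ → ℂ := fun i k => if i = k then 1 else 0

/-- The polynomial given by row `k` of a lower triangular matrix. -/
noncomputable def rowPoly (M : ℕ → ℕ → ℂ) (k : ℕ) : Polynomial ℂ :=
  ∑ j ∈ Finset.range (k + 1), Polynomial.C (M k j) * Polynomial.X ^ j

/-- The differentiation matrix `D`, with `D_{k+1,k} = k+1`. -/
def Dmat : ℕ → ℕ → ℂ := fun i k => if i = k + 1 then (i : ℂ) else 0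

namespace Stmt14Aux

noncomputable def T (k m i j : ℕ) : ℂ :=
  if j + k = i + m then (Nat.descFactorial i k : ℂ) else 0

def Hm (a b : ℂ) : ℕ → ℕ → ℂ := fun i k => Xmat i k + b * Imat i k + a * Dmat i k

lemma matPow_X (m i j : ℕ) : matPow Xmat m i j = if j = i + m then (1:ℂ) else 0 := by
  induction m generalizing j with
  | zero => simp [matPow, eq_comm]
  | succ m ih =>
    have h : matPow Xmat (m+1) i j = ∑' l, matPow Xmat m i l * Xmat l j := rfl
    rw [h, tsum_eq_single (i+m) (by intro b hb; rw [ih]; simp [hb])]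
    rw [ih]
    simp only [Xmat, mul_ite, mul_one, mul_zero, ite_mul, one_mul, zero_mul]
    rw [show i + (m+1) = i + m + 1 from rfl]
    simp

lemma matPow_D (k i j : ℕ) : matPow Dmat k i j = if i = j + k then (Nat.descFactorial i k : ℂ) else 0 := by
  induction k generalizing j with
  | zero => simp [matPow]
  | succ k ih =>
    have h : matPow Dmat (k+1) i j = ∑' l, matPow Dmat k i l * Dmat l j := rfl
    rw [h, tsum_eq_single (j+1) (by intro b hb; simp [Dmat, hb])]
    rw [ih]
    simp only [Dmat, if_pos rfl]
    by_cases hc : i = j + (k+1)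
    · rw [if_pos (by omega), if_pos hc]
      subst hc
      have h2 : j + (k + 1) - k = j + 1 := by omega
      rw [Nat.descFactorial_succ, h2]
      push_cast
      ring
    · rw [if_neg (by omega), if_neg hc, zero_mul]

lemma T_eq (k m i j : ℕ) : matMul (matPow Dmat k) (matPow Xmat m) i j = T k m i j := by
  have h : matMul (matPow Dmat k) (matPow Xmat m) i j
      = ∑' l, matPow Dmat k i l * matPow Xmat m l j := rfl
  by_cases hk : k ≤ i
  · rw [h, tsum_eq_single (i - k) (by
      intro b hb
      rw [matPow_D, if_neg (by omega), zero_mul])]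
    rw [matPow_D, matPow_X, if_pos (by omega)]
    unfold T
    by_cases hc : j = i - k + m
    · rw [if_pos hc, if_pos (by omega), mul_one]
    · rw [if_neg hc, if_neg (by omega), mul_zero]
  · have hz : ∀ l, matPow Dmat k i l * matPow Xmat m l j = 0 := by
      intro l
      rw [matPow_D, if_neg (by omega), zero_mul]
    rw [h, tsum_eq_single 0 (fun b _ => hz b), hz 0]
    have hd : (Nat.descFactorial i k : ℂ) = 0 := by
      rw [Nat.descFactorial_eq_zero_iff_lt.2 (by omega)]; simp
    simp [T, hd]

lemma mulH (a b : ℂ) (M : ℕ → ℕ → ℂ) (i j : ℕ) :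
    matMul M (Hm a b) i j
      = (if j = 0 then 0 else M i (j-1)) + b * M i j + a * (j+1) * M i (j+1) := by
  have h : matMul M (Hm a b) i j = ∑' l, M i l * Hm a b l j := rfl
  rw [h]
  rcases j with _ | j'
  · rw [tsum_eq_sum (s := {0, 1}) (by
      intro l hl
      simp only [Finset.mem_insert, Finset.mem_singleton, not_or] at hl
      simp [Hm, Xmat, Imat, Dmat, hl.1, hl.2, Ne.symm hl.1])]
    simp [Hm, Xmat, Imat, Dmat]
    ring
  · rw [tsum_eq_sum (s := {j', j'+1, j'+2}) (by
      intro l hl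
      simp only [Finset.mem_insert, Finset.mem_singleton, not_or] at hl
      have h1 : ¬ (j' + 1 = l + 1) := by omega
      have h2 : ¬ (l = j' + 1) := hl.2.1
      have h3 : ¬ (l = j' + 1 + 1) := by omega
      simp [Hm, Xmat, Imat, Dmat, h1, h2, h3, Ne.symm hl.1])]
    rw [Finset.sum_insert (by simp), Finset.sum_insert (by simp)]
    simp [Hm, Xmat, Imat, Dmat]
    rw [if_neg (by omega : ¬ (j' = j' + 1 + 1))]
    ring

end Stmt14Aux

namespace Stmt14Aux

lemma T_shiftX (k m i j : ℕ) :
    T k (m+1) i j = if j = 0 then 0 else T k m i (j-1) := by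
  rcases j with _ | j'
  · rw [if_pos rfl]
    unfold T
    by_cases h : 0 + k = i + (m+1)
    · rw [if_pos h, Nat.descFactorial_eq_zero_iff_lt.2 (by omega)]; simp
    · rw [if_neg h]
  · rw [if_neg (by omega)]
    unfold T
    by_cases h : j' + 1 + k = i + (m+1)
    · rw [if_pos h, if_pos (by omega)]
    · rw [if_neg h, if_neg (by omega)]

lemma T_D (k m i j : ℕ) :
    ((j:ℂ)+1) * T k m i (j+1) = T (k+1) m i j + (m:ℂ) * T k (m-1) i j := by
  unfold T
  by_cases h : j + 1 + k = i + m
  · rw [if_pos h, if_pos (by omega)]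
    by_cases hk : k ≤ i
    · rw [Nat.descFactorial_succ]
      have h4 : ((i - k : ℕ) : ℂ) = (j:ℂ) + 1 - m := by
        have h5 : (i - k) + m = j + 1 := by omega
        have h6 := congrArg (fun t : ℕ => (t : ℂ)) h5
        push_cast at h6
        linear_combination h6
      rcases Nat.eq_zero_or_pos m with hm | hm
      · subst hm
        push_cast
        rw [h4]
        push_cast
        ring
      · rw [if_pos (by omega)]
        push_cast
        rw [h4]
        ring
    · have d0 : (Nat.descFactorial i k : ℂ) = 0 := by
        rw [Nat.descFactorial_eq_zero_iff_lt.2 (by omega)]; simp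
      have d1 : (Nat.descFactorial i (k+1) : ℂ) = 0 := by
        rw [Nat.descFactorial_eq_zero_iff_lt.2 (by omega)]; simp
      rw [d0, d1]
      split <;> simp <;> ring
  · rw [if_neg h, if_neg (by omega)]
    rcases Nat.eq_zero_or_pos m with hm | hm
    · subst hm; simp
    · rw [if_neg (by omega)]; ring

lemma matPolyEval_eq_sum (w : Polynomial ℂ) (A : ℕ → ℕ → ℂ) (N : ℕ)
    (h : w.natDegree < N) (i j : ℕ) :
    matPolyEval w A i j = ∑ m ∈ Finset.range N, w.coeff m * matPow A m i j := by
  unfold matPolyEval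
  apply Finset.sum_subset (Finset.range_subset_range.2 (by omega))
  intro m _ hm
  rw [Polynomial.coeff_eq_zero_of_natDegree_lt (by simp only [Finset.mem_range] at hm; omega),
    zero_mul]

end Stmt14Aux

namespace Stmt14Aux

lemma step (a b c : ℂ) (u v : Polynomial ℂ) (i j : ℕ) :
    matPolyEval ((Polynomial.X - Polynomial.C b) * u - Polynomial.C c * v) (Hm a b) i j
      = (if j = 0 then 0 else matPolyEval u (Hm a b) i (j-1))
        + a * ((j:ℂ)+1) * matPolyEval u (Hm a b) i (j+1)
        - c * matPolyEval v (Hm a b) i j := by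
  set K := max u.natDegree v.natDegree with hK
  have hdu : u.natDegree < K + 1 := by
    have := le_max_left u.natDegree v.natDegree; omega
  have hdv : v.natDegree < K + 2 := by
    have := le_max_right u.natDegree v.natDegree; omega
  have hw : ((Polynomial.X - Polynomial.C b) * u - Polynomial.C c * v).natDegree < K + 2 := by
    apply lt_of_le_of_lt (Polynomial.natDegree_sub_le _ _)
    apply max_lt
    · apply lt_of_le_of_lt (Polynomial.natDegree_mul_le)
      rw [Polynomial.natDegree_X_sub_C]
      omega
    · exact lt_of_le_of_lt (Polynomial.natDegree_C_mul_le c v) (by omega)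
  rw [matPolyEval_eq_sum _ _ (K+2) hw i j]
  have hco : ∀ m, ((Polynomial.X - Polynomial.C b) * u - Polynomial.C c * v).coeff m
      = (Polynomial.X * u).coeff m - b * u.coeff m - c * v.coeff m := by
    intro m
    rw [sub_mul]
    simp [Polynomial.coeff_sub, Polynomial.coeff_C_mul]
  simp only [hco]
  simp only [sub_mul]
  rw [Finset.sum_sub_distrib, Finset.sum_sub_distrib]
  -- first sum: split off m = 0 and use mulH
  have hsplit := Finset.sum_range_succ'
    (fun m => (Polynomial.X * u).coeff m * matPow (Hm a b) m i j) (K+1)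
  rw [show (K+2) = (K+1)+1 from rfl, hsplit]
  have hf0 : (Polynomial.X * u).coeff 0 * matPow (Hm a b) 0 i j = 0 := by
    rw [Polynomial.mul_coeff_zero, Polynomial.coeff_X_zero, zero_mul, zero_mul]
  rw [hf0, add_zero]
  have hXu : ∀ m, (Polynomial.X * u).coeff (m+1) * matPow (Hm a b) (m+1) i j
      = u.coeff m * (if j = 0 then 0 else matPow (Hm a b) m i (j-1))
        + b * (u.coeff m * matPow (Hm a b) m i j)
        + a * ((j:ℂ)+1) * (u.coeff m * matPow (Hm a b) m i (j+1)) := by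
    intro m
    rw [Polynomial.coeff_X_mul]
    rw [show matPow (Hm a b) (m+1) i j = matMul (matPow (Hm a b) m) (Hm a b) i j from rfl]
    rw [mulH]
    push_cast
    ring
  simp only [hXu]
  rw [Finset.sum_add_distrib, Finset.sum_add_distrib]
  -- pull out the if
  have hif : ∑ m ∈ Finset.range (K+1),
      (u.coeff m * if j = 0 then 0 else matPow (Hm a b) m i (j-1))
      = if j = 0 then 0 else ∑ m ∈ Finset.range (K+1), u.coeff m * matPow (Hm a b) m i (j-1) := by
    split <;> simp
  rw [hif, ← Finset.mul_sum, ← Finset.mul_sum]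
  -- middle subtracted sum: drop top coefficient
  rw [Finset.sum_range_succ (fun m => b * u.coeff m * matPow (Hm a b) m i j) (K+1),
    Polynomial.coeff_eq_zero_of_natDegree_lt hdu]
  have hmid : ∑ m ∈ Finset.range (K+1), b * u.coeff m * matPow (Hm a b) m i j
      = b * ∑ m ∈ Finset.range (K+1), u.coeff m * matPow (Hm a b) m i j := by
    rw [Finset.mul_sum]
    exact Finset.sum_congr rfl (fun m _ => by ring)
  have hv : ∑ m ∈ Finset.range (K+2), c * v.coeff m * matPow (Hm a b) m i j
      = c * ∑ m ∈ Finset.range (K+2), v.coeff m * matPow (Hm a b) m i j := by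
    rw [Finset.mul_sum]
    exact Finset.sum_congr rfl (fun m _ => by ring)
  rw [hmid, hv]
  rw [← matPolyEval_eq_sum u _ (K+1) hdu i (j-1), ← matPolyEval_eq_sum u _ (K+1) hdu i j,
    ← matPolyEval_eq_sum u _ (K+1) hdu i (j+1), ← matPolyEval_eq_sum v _ (K+2) hdv i j]
  ring

end Stmt14Aux

namespace Stmt14Aux

noncomputable def S (a : ℂ) (n i j : ℕ) : ℂ :=
  ∑ k ∈ Finset.range (n+1), (n.choose k : ℂ) * a^k * T k (n-k) i j

lemma Srec (a : ℂ) (n i j : ℕ) (hn : 1 ≤ n) :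
    S a (n+1) i j = (if j = 0 then 0 else S a n i (j-1))
      + a * ((j:ℂ)+1) * S a n i (j+1) - (a * n) * S a (n-1) i j := by
  -- the four building blocks
  set P1 : ℂ := ∑ k ∈ Finset.range (n+1),
      (n.choose k : ℂ) * a^(k+1) * T (k+1) (n-k) i j with hP1
  set P2 : ℂ := ∑ k ∈ Finset.range (n+1),
      (n.choose (k+1) : ℂ) * a^(k+1) * T (k+1) (n-k) i j with hP2
  set Q : ℂ := ∑ k ∈ Finset.range (n+1),
      (n.choose k : ℂ) * ((n-k : ℕ) : ℂ) * a^(k+1) * T k (n-k-1) i j with hQ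
  have hL : S a (n+1) i j = P1 + P2 + T 0 (n+1) i j := by
    unfold S
    have h1 := Finset.sum_range_succ'
      (fun k => (((n+1).choose k : ℕ) : ℂ) * a^k * T k (n+1-k) i j) (n+1)
    rw [h1]
    simp only [Nat.choose_zero_right, Nat.cast_one, pow_zero, one_mul, Nat.succ_sub_succ,
      Nat.sub_zero]
    rw [hP1, hP2, ← Finset.sum_add_distrib]
    congr 1
    apply Finset.sum_congr rfl
    intro k _
    rw [Nat.choose_succ_succ]
    push_cast
    ring
  have hA : (if j = 0 then 0 else S a n i (j-1)) = P2 + T 0 (n+1) i j := by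
    have h1 : (if j = 0 then 0 else S a n i (j-1))
        = ∑ k ∈ Finset.range (n+1), (n.choose k : ℂ) * a^k * T k ((n-k)+1) i j := by
      simp only [T_shiftX]
      unfold S
      split
      · simp
      · rfl
    rw [h1]
    have h2 := Finset.sum_range_succ'
      (fun k => ((n.choose k : ℕ) : ℂ) * a^k * T k ((n-k)+1) i j) n
    rw [h2]
    simp only [Nat.choose_zero_right, Nat.cast_one, pow_zero, one_mul, Nat.sub_zero]
    rw [hP2, Finset.sum_range_succ]
    rw [Nat.choose_succ_self]
    simp only [Nat.cast_zero, zero_mul, add_zero]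
    congr 1
    apply Finset.sum_congr rfl
    intro k hk
    simp only [Finset.mem_range] at hk
    rw [show n - (k+1) + 1 = n - k from by omega]
  have hB : a * ((j:ℂ)+1) * S a n i (j+1) = P1 + Q := by
    unfold S
    rw [Finset.mul_sum, hP1, hQ, ← Finset.sum_add_distrib]
    apply Finset.sum_congr rfl
    intro k _
    have hTD := T_D k (n-k) i j
    calc a * ((j:ℂ)+1) * ((n.choose k : ℂ) * a^k * T k (n-k) i (j+1))
        = (n.choose k : ℂ) * a^(k+1) * (((j:ℂ)+1) * T k (n-k) i (j+1)) := by ring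
      _ = (n.choose k : ℂ) * a^(k+1)
            * (T (k+1) (n-k) i j + ((n-k : ℕ) : ℂ) * T k (n-k-1) i j) := by rw [hTD]
      _ = _ := by ring
  have hC : (a * n) * S a (n-1) i j = Q := by
    rw [hQ, Finset.sum_range_succ]
    simp only [Nat.sub_self, Nat.cast_zero, mul_zero, zero_mul, add_zero]
    unfold S
    rw [show n - 1 + 1 = n from by omega, Finset.mul_sum]
    apply Finset.sum_congr rfl
    intro k hk
    simp only [Finset.mem_range] at hk
    have hnk : (n - k) * n.choose k = n * (n-1).choose k := by
      have h1 := Nat.add_one_mul_choose_eq (n-1) k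
      have h2 := Nat.choose_succ_right_eq n k
      rw [show n - 1 + 1 = n from by omega] at h1
      rw [h1, h2, Nat.mul_comm]
    have hnk' : ((n - k : ℕ) : ℂ) * (n.choose k : ℂ) = (n : ℂ) * ((n-1).choose k : ℂ) := by
      exact_mod_cast congrArg (fun t : ℕ => (t : ℂ)) hnk
    rw [show n - 1 - k = n - k - 1 from by omega]
    calc a * (n:ℂ) * ((((n-1).choose k : ℕ) : ℂ) * a^k * T k (n-k-1) i j)
        = ((n:ℂ) * (((n-1).choose k : ℕ) : ℂ)) * a^(k+1) * T k (n-k-1) i j := by ring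
      _ = (((n-k : ℕ):ℂ) * (n.choose k : ℂ)) * a^(k+1) * T k (n-k-1) i j := by rw [hnk']
      _ = _ := by ring
  rw [hL, hA, hB, hC]
  ring

end Stmt14Aux

open Stmt14Aux in
theorem stmt14 (a b : ℂ) (ha : a ≠ 0) (p : ℕ → Polynomial ℂ)
    (hp0 : p 0 = 1) (hp1 : p 1 = Polynomial.X - Polynomial.C b)
    (hrec : ∀ n : ℕ, 1 ≤ n →
      p (n + 1) = (Polynomial.X - Polynomial.C b) * p n - Polynomial.C (a * n) * p (n - 1)) :
    let H : ℕ → ℕ → ℂ := fun i k => Xmat i k + b * Imat i k + a * Dmat i k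
    ∀ n i j : ℕ,
      matPolyEval (p n) H i j =
        ∑ k ∈ Finset.range (n + 1),
          (n.choose k : ℂ) * a ^ k * matMul (matPow Dmat k) (matPow Xmat (n - k)) i j := by
  intro H
  have key : ∀ n, ∀ i j : ℕ, matPolyEval (p n) (Hm a b) i j = S a n i j := by
    intro n
    induction n using Nat.strong_induction_on with
    | _ n ih =>
      match n, ih with
      | 0, _ =>
        intro i j
        have l1 : matPolyEval 1 (Hm a b) i j = if i = j then (1:ℂ) else 0 := by
          rw [matPolyEval_eq_sum 1 (Hm a b) 1 (by simp) i j, Finset.sum_range_one]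
          simp [matPow]
        have l2 : S a 0 i j = if i = j then (1:ℂ) else 0 := by
          unfold S
          rw [Finset.sum_range_one]
          unfold T
          by_cases hij : i = j
          · rw [if_pos (by omega)]; simp [hij]
          · rw [if_neg (by omega)]; simp [hij]
        rw [hp0, l1, l2]
      | 1, _ =>
        intro i j
        rw [hp1]
        rw [matPolyEval_eq_sum _ (Hm a b) 2 (by rw [Polynomial.natDegree_X_sub_C]; omega) i j]
        rw [Finset.sum_range_succ, Finset.sum_range_one]
        have hc0 : (Polynomial.X - Polynomial.C b).coeff 0 = -b := by simp
        have hc1 : (Polynomial.X - Polynomial.C b).coeff 1 = 1 := by simp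
        rw [hc0, hc1, one_mul]
        rw [show matPow (Hm a b) 1 i j = matMul (matPow (Hm a b) 0) (Hm a b) i j from rfl,
          mulH]
        have hP0 : ∀ j' : ℕ, matPow (Hm a b) 0 i j' = if i = j' then (1:ℂ) else 0 := fun _ => rfl
        simp only [hP0]
        unfold S T
        rw [Finset.sum_range_succ, Finset.sum_range_one]
        simp only [Nat.choose_zero_right, Nat.choose_one_right, Nat.cast_one, pow_zero, one_mul,
          pow_one, Nat.sub_zero, Nat.sub_self, Nat.descFactorial_zero, Nat.descFactorial_one,
          Nat.cast_one]
        have e1 : (if j = 0 then (0:ℂ) else if i = j - 1 then 1 else 0)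
            = (if j + 0 = i + 1 then (1:ℂ) else 0) := by
          rcases j with _ | j'
          · rw [if_pos rfl, if_neg (by omega)]
          · rw [if_neg (by omega)]
            simp only [Nat.add_sub_cancel]
            by_cases h : i = j'
            · rw [if_pos h, if_pos (by omega)]
            · rw [if_neg h, if_neg (by omega)]
        have e2 : a * ((j:ℂ)+1) * (if i = j+1 then (1:ℂ) else 0)
            = a * (if j + 1 = i + 0 then ((i:ℕ):ℂ) else 0) := by
          by_cases h : i = j + 1
          · rw [if_pos h, if_pos (by omega), h]
            push_cast
            ring
          · rw [if_neg h, if_neg (by omega)]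
            ring
        rw [e1, e2]
        ring
      | (m+2), ih =>
        intro i j
        rw [hrec (m+1) (by omega), show (m+1) - 1 = m from rfl]
        rw [step a b (a * ((m+1 : ℕ) : ℂ)) (p (m+1)) (p m) i j]
        simp only [ih (m+1) (by omega), ih m (by omega)]
        rw [show ((m:ℕ)+2) = (m+1)+1 from rfl, Srec a (m+1) i j (by omega)]
        rfl
  intro n i j
  show matPolyEval (p n) (Hm a b) i j = _
  rw [key n i j]
  unfold S
  exact Finset.sum_congr rfl (fun k _ => by rw [T_eq])
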